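/- For every natural number n, the number of words of length n over a four-letter alphabet {−1, 0, 0̄, 1} (where both 0 and 0̄ have value 0 in sums) whose total value is 0 and all of whose partial value-sums are nonnegative equals Σ_{k ≥ 0} C(n, 2k) · 2^(n−2k) · C_k. -/

import Mathlib

inductive Letter : Type
  | up | zero | zbar | down
deriving DecidableEq

def val : Letter → ℤ
  | .up => 1
  | .zero => 0
  | .zbar => 0
  | .down => -1

open DyckStep List

def isNZ : Letter → Bool
  | .up => true
  | .down => true
  | _ => false

def toStep : Letter → DyckStep
  | .up => U
  | _ => D

def zbit : Letter → Bool
  | .zero => true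
  | _ => false

def ofStep : DyckStep → Letter
  | U => .up
  | D => .down

def ofZ : Bool → Letter
  | true => .zero
  | false => .zbar

def dyckOf (w : List Letter) : List DyckStep := (w.filter isNZ).map toStep
def zerosOf (w : List Letter) : List Bool := (w.filter (fun l => !isNZ l)).map zbit
def maskOf (w : List Letter) : List Bool := w.map isNZ

def riffle : List Bool → List DyckStep → List Bool → List Letter
  | [], _, _ => []
  | true :: m, d :: ds, zs => ofStep d :: riffle m ds zs
  | true :: _, [], _ => []
  | false :: m, ds, z :: zs => ofZ z :: riffle m ds zs
  | false :: _, _, [] => []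

lemma merge_split (w : List Letter) : riffle (maskOf w) (dyckOf w) (zerosOf w) = w := by
  induction w with
  | nil => rfl
  | cons a t ih =>
    cases a <;> simpa [maskOf, dyckOf, zerosOf, riffle, isNZ, toStep, zbit, ofStep, ofZ, List.filter_cons] using ih

lemma split_merge (m : List Bool) (ds : List DyckStep) (zs : List Bool)
    (hd : ds.length = m.count true) (hz : zs.length = m.count false) :
    maskOf (riffle m ds zs) = m ∧ dyckOf (riffle m ds zs) = ds ∧ zerosOf (riffle m ds zs) = zs := by
  induction m generalizing ds zs with
  | nil =>
    simp_all [riffle, maskOf, dyckOf, zerosOf]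
  | cons b t ih =>
    cases b with
    | true =>
      obtain ⟨d, ds, rfl⟩ : ∃ d ds', ds = d :: ds' := by
        cases ds with
        | nil => simp at hd
        | cons d ds' => exact ⟨d, ds', rfl⟩
      have := ih ds zs (by simpa using hd) (by simpa using hz)
      cases d <;>
        simpa [riffle, maskOf, dyckOf, zerosOf, ofStep, isNZ, toStep, List.filter_cons] using this
    | false =>
      obtain ⟨z, zs, rfl⟩ : ∃ z zs', zs = z :: zs' := by
        cases zs with
        | nil => simp at hz
        | cons z zs' => exact ⟨z, zs', rfl⟩
      have := ih ds zs (by simpa using hd) (by simpa using hz)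
      cases z <;>
        simpa [riffle, maskOf, dyckOf, zerosOf, ofZ, isNZ, zbit] using this
def stepVal : DyckStep → ℤ
  | U => 1
  | D => -1

lemma sum_val_eq (w : List Letter) :
    (w.map val).sum = ((dyckOf w).map stepVal).sum := by
  induction w with
  | nil => rfl
  | cons a t ih => cases a <;> simp [dyckOf, isNZ, toStep, val, stepVal, ih, List.filter_cons] <;> omega

lemma sum_stepVal (l : List DyckStep) :
    (l.map stepVal).sum = (l.count U : ℤ) - l.count D := by
  induction l with
  | nil => rfl
  | cons d t ih => cases d <;> simp [stepVal, ih, count_cons] <;> ring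

lemma dyckOf_prefix {p w : List Letter} (h : p <+: w) : dyckOf p <+: dyckOf w :=
  (h.filter _).map _

lemma exists_prefix_dyckOf {w : List Letter} {q : List DyckStep} (h : q <+: dyckOf w) :
    ∃ p, p <+: w ∧ dyckOf p = q := by
  induction w generalizing q with
  | nil => exact ⟨[], by simpa [dyckOf] using h⟩
  | cons a t ih =>
    rcases q with _ | ⟨d, q⟩
    · exact ⟨[], by simp [dyckOf]⟩
    · by_cases ha : isNZ a
      · rw [show dyckOf (a :: t) = toStep a :: dyckOf t by simp [dyckOf, ha]] at h
        obtain ⟨rfl, h2⟩ := by simpa [List.cons_prefix_cons] using h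
        obtain ⟨p, hp, hd⟩ := ih h2
        exact ⟨a :: p, List.cons_prefix_cons.mpr ⟨rfl, hp⟩, by
          rw [show dyckOf (a :: p) = toStep a :: dyckOf p from by simp [dyckOf, ha], hd]⟩
      · rw [show dyckOf (a :: t) = dyckOf t by simp [dyckOf, ha]] at h
        obtain ⟨p, hp, hd⟩ := ih h
        exact ⟨a :: p, List.cons_prefix_cons.mpr ⟨rfl, hp⟩, by
          rw [show dyckOf (a :: p) = dyckOf p from by simp [dyckOf, ha], hd]⟩

theorem card_len_bool (j : ℕ) : Nat.card {z : List Bool // z.length = j} = 2 ^ j := by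
  have : {z : List Bool // z.length = j} = List.Vector Bool j := rfl
  rw [this, Nat.card_eq_fintype_card, card_vector]
  simp

noncomputable instance listSubFinite (n : ℕ) (P : List Bool → Prop) :
    Finite {m : List Bool // m.length = n ∧ P m} := by
  have h : {m : List Bool | m.length = n ∧ P m}.Finite :=
    (List.finite_length_eq Bool n).subset (fun m hm => hm.1)
  exact h.to_subtype

def splitFun (n j : ℕ) :
    {m : List Bool // m.length = n + 1 ∧ m.count true = j} →
      {t : List Bool // t.length = n ∧ t.count true + 1 = j} ⊕
      {t : List Bool // t.length = n ∧ t.count true = j}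
  | ⟨true :: t, h⟩ => .inl ⟨t, by simpa using h.1, by simpa [List.count_cons] using h.2⟩
  | ⟨false :: t, h⟩ => .inr ⟨t, by simpa using h.1, by simpa [List.count_cons] using h.2⟩

def joinFun (n j : ℕ) :
    ({t : List Bool // t.length = n ∧ t.count true + 1 = j} ⊕
      {t : List Bool // t.length = n ∧ t.count true = j}) →
      {m : List Bool // m.length = n + 1 ∧ m.count true = j}
  | .inl ⟨t, h⟩ => ⟨true :: t, by simp [h.1], by simpa [List.count_cons] using h.2⟩
  | .inr ⟨t, h⟩ => ⟨false :: t, by simp [h.1], by simpa [List.count_cons] using h.2⟩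

def splitEquiv (n j : ℕ) :
    {m : List Bool // m.length = n + 1 ∧ m.count true = j} ≃
      ({t : List Bool // t.length = n ∧ t.count true + 1 = j} ⊕
      {t : List Bool // t.length = n ∧ t.count true = j}) where
  toFun := splitFun n j
  invFun := joinFun n j
  left_inv := by
    rintro ⟨(_ | ⟨(b | b), t⟩), h1, h2⟩
    · exact absurd h1 (by simp)
    · rfl
    · rfl
  right_inv := by rintro (⟨t, h⟩ | ⟨t, h⟩) <;> rfl

theorem card_mask (n : ℕ) : ∀ j, Nat.card {m : List Bool // m.length = n ∧ m.count true = j}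
    = n.choose j := by
  induction n with
  | zero =>
    intro j
    rcases j with _ | j
    · rw [Nat.card_eq_one_iff_unique.mpr]
      · simp
      constructor
      · constructor
        intro a b
        ext1
        rcases a with ⟨a, ha, -⟩; rcases b with ⟨b, hb, -⟩
        simp [List.length_eq_zero_iff.mp ha, List.length_eq_zero_iff.mp hb]
      · exact ⟨⟨[], by simp⟩⟩
    · have : IsEmpty {m : List Bool // m.length = 0 ∧ m.count true = j + 1} := by
        constructor
        rintro ⟨m, hm, hc⟩
        rw [List.length_eq_zero_iff.mp hm] at hc
        simp at hc
      rw [Nat.card_of_isEmpty]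
      simp
  | succ n ih =>
    intro j
    rw [Nat.card_congr (splitEquiv n j), Nat.card_sum]
    rcases j with _ | j
    · have : IsEmpty {t : List Bool // t.length = n ∧ t.count true + 1 = 0} :=
        ⟨by rintro ⟨t, h1, h2⟩; omega⟩
      rw [Nat.card_of_isEmpty]
      simp [ih]
    · have : {t : List Bool // t.length = n ∧ t.count true + 1 = j + 1} =
          {t : List Bool // t.length = n ∧ t.count true = j} := by
        simp only [Nat.add_right_cancel_iff]
      rw [this, ih, ih, Nat.choose_succ_succ']
lemma count_true_maskOf (w : List Letter) :
    (maskOf w).count true = (w.filter isNZ).length := by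
  induction w with
  | nil => rfl
  | cons a t ih => cases a <;> simp_all [maskOf, isNZ, List.count_cons, List.filter_cons]

lemma count_tf (m : List Bool) : m.count true + m.count false = m.length := by
  induction m with
  | nil => rfl
  | cons b t ih => cases b <;> simp [List.count_cons] <;> omega

/-- The key equivalence between word conditions and Dyck conditions. -/
lemma key (w : List Letter) :
    ((w.map val).sum = 0 ∧ ∀ p, p <+: w → 0 ≤ (p.map val).sum) ↔
      ((dyckOf w).count U = (dyckOf w).count D ∧
        ∀ i, ((dyckOf w).take i).count D ≤ ((dyckOf w).take i).count U) := by
  constructor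
  · rintro ⟨h0, hp⟩
    constructor
    · have := sum_val_eq w
      rw [h0, sum_stepVal] at this
      omega
    · intro i
      obtain ⟨p, hpw, hd⟩ := exists_prefix_dyckOf (w := w) (q := ((dyckOf w).take i))
        (List.take_prefix i _)
      have := hp p hpw
      rw [sum_val_eq, hd, sum_stepVal] at this
      omega
  · rintro ⟨h0, hp⟩
    constructor
    · rw [sum_val_eq, sum_stepVal, h0]; ring
    · intro p hpw
      have h1 : dyckOf p <+: dyckOf w := dyckOf_prefix hpw
      rw [sum_val_eq, sum_stepVal]
      have h2 := hp (dyckOf p).length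
      rw [← List.prefix_iff_eq_take.mp h1] at h2
      omega

instance lenBoolFinite (j : ℕ) : Finite {z : List Bool // z.length = j} :=
  (List.finite_length_eq Bool j).to_subtype

theorem four_letter_words_card (n : ℕ) :
    {w : List Letter | w.length = n ∧ (w.map val).sum = 0 ∧
      ∀ p, p <+: w → 0 ≤ (p.map val).sum}.ncard =
    ∑ k ∈ Finset.range (n + 1), n.choose (2 * k) * 2 ^ (n - 2 * k) * catalan k := by
  classical
  have mem_iff : ∀ w : List Letter, w ∈ {w : List Letter | w.length = n ∧ (w.map val).sum = 0 ∧
      ∀ p, p <+: w → 0 ≤ (p.map val).sum} ↔ (w.length = n ∧ (dyckOf w).count U = (dyckOf w).count D ∧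
      ∀ i, ((dyckOf w).take i).count D ≤ ((dyckOf w).take i).count U) := by
    intro w
    rw [Set.mem_setOf_eq, and_congr_right_iff]
    intro _
    exact key w
  have gmem : ∀ x : (Σ k : Fin (n + 1),
      ({m : List Bool // m.length = n ∧ m.count true = 2 * (k : ℕ)} ×
       {p : DyckWord // p.semilength = (k : ℕ)} ×
       {z : List Bool // z.length = n - 2 * (k : ℕ)})),
      riffle x.2.1.1 x.2.2.1.1.toList x.2.2.2.1 ∈ {w : List Letter | w.length = n ∧
        (w.map val).sum = 0 ∧ ∀ p, p <+: w → 0 ≤ (p.map val).sum} := by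
    rintro ⟨k, ⟨m, hm1, hm2⟩, ⟨dw, hdw⟩, ⟨z, hz⟩⟩
    show riffle m dw.toList z ∈ _
    have hdlen : dw.toList.length = m.count true := by
      rw [hm2, ← hdw, ← dw.two_mul_semilength_eq_length]
    have h2kn : 2 * (k : ℕ) ≤ n := by
      have := List.count_le_length (l := m) (a := true)
      omega
    have hzlen : z.length = m.count false := by
      have := count_tf m
      omega
    obtain ⟨hmask, hdyck, hzeros⟩ := split_merge m dw.toList z hdlen hzlen
    rw [mem_iff, hdyck]
    refine ⟨?_, dw.count_U_eq_count_D, dw.count_D_le_count_U⟩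
    have hl := congrArg List.length hmask
    simp only [maskOf, List.length_map] at hl
    omega
  set g : (Σ k : Fin (n + 1),
      ({m : List Bool // m.length = n ∧ m.count true = 2 * (k : ℕ)} ×
       {p : DyckWord // p.semilength = (k : ℕ)} ×
       {z : List Bool // z.length = n - 2 * (k : ℕ)})) →
      ↥{w : List Letter | w.length = n ∧ (w.map val).sum = 0 ∧
        ∀ p, p <+: w → 0 ≤ (p.map val).sum} :=
    fun x => ⟨riffle x.2.1.1 x.2.2.1.1.toList x.2.2.2.1, gmem x⟩ with hg
  have hginj : Function.Injective g := by
    rintro ⟨⟨kv, hkv⟩, ⟨m, hm1, hm2⟩, ⟨dw, hdw⟩, ⟨z, hz⟩⟩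
           ⟨⟨kv', hkv'⟩, ⟨m', hm1', hm2'⟩, ⟨dw', hdw'⟩, ⟨z', hz'⟩⟩ h
    have hm2a : m.count true = 2 * kv := hm2
    have hdwa : dw.semilength = kv := hdw
    have hza : z.length = m.count false := by
      have := count_tf m
      have := List.count_le_length (l := m) (a := true)
      have hzb : z.length = n - 2 * kv := hz
      omega
    have hm2a' : m'.count true = 2 * kv' := hm2'
    have hdwa' : dw'.semilength = kv' := hdw'
    have hza' : z'.length = m'.count false := by
      have := count_tf m'
      have := List.count_le_length (l := m') (a := true)
      have hzb' : z'.length = n - 2 * kv' := hz'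
      omega
    have hdlen : dw.toList.length = m.count true := by
      rw [hm2a, ← hdwa, ← dw.two_mul_semilength_eq_length]
    have hdlen' : dw'.toList.length = m'.count true := by
      rw [hm2a', ← hdwa', ← dw'.two_mul_semilength_eq_length]
    obtain ⟨hmask, hdyck, hzeros⟩ := split_merge m dw.toList z hdlen hza
    obtain ⟨hmask', hdyck', hzeros'⟩ := split_merge m' dw'.toList z' hdlen' hza'
    have hval : riffle m dw.toList z = riffle m' dw'.toList z' := congrArg Subtype.val h
    obtain rfl : m = m' := by rw [← hmask, ← hmask', hval]
    obtain rfl : dw = dw' := DyckWord.ext (by rw [← hdyck, ← hdyck', hval])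
    obtain rfl : z = z' := by rw [← hzeros, ← hzeros', hval]
    obtain rfl : kv = kv' := by omega
    rfl
  have hgsurj : Function.Surjective g := by
    rintro ⟨w, hw⟩
    obtain ⟨hlen, hUD, hpre⟩ := (mem_iff w).mp hw
    have h2 : 2 * (dyckOf w).count U = (dyckOf w).length :=
      (⟨dyckOf w, hUD, hpre⟩ : DyckWord).two_mul_semilength_eq_length
    have h5 : (dyckOf w).length = (w.filter isNZ).length := by simp [dyckOf]
    have h4 := List.length_eq_length_filter_add (l := w) isNZ
    have h6 : (zerosOf w).length = (w.filter (fun l => !isNZ l)).length := by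
      simp [zerosOf]
    have h7 : (maskOf w).count true = (w.filter isNZ).length := count_true_maskOf w
    refine ⟨⟨⟨(dyckOf w).count U, by omega⟩,
      ⟨maskOf w, by simp [maskOf, hlen], by show (maskOf w).count true = 2 * (dyckOf w).count U; omega⟩,
      ⟨⟨dyckOf w, hUD, hpre⟩, rfl⟩,
      ⟨zerosOf w, by show (zerosOf w).length = n - 2 * (dyckOf w).count U; omega⟩⟩,
      Subtype.ext (merge_split w)⟩
  have E := (Equiv.ofBijective g ⟨hginj, hgsurj⟩).symm
  rw [← Nat.card_coe_set_eq, Nat.card_congr E]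
  letI : ∀ k : Fin (n+1), Fintype {m : List Bool // m.length = n ∧ m.count true = 2 * (k:ℕ)} :=
    fun k => Fintype.ofFinite _
  letI : ∀ k : Fin (n+1), Fintype {z : List Bool // z.length = n - 2 * (k:ℕ)} :=
    fun k => Fintype.ofFinite _
  rw [Nat.card_eq_fintype_card, Fintype.card_sigma]
  have hcard : ∀ k : Fin (n + 1),
      Fintype.card ({m : List Bool // m.length = n ∧ m.count true = 2 * (k : ℕ)} ×
       {p : DyckWord // p.semilength = (k : ℕ)} ×
       {z : List Bool // z.length = n - 2 * (k : ℕ)}) =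
      n.choose (2 * (k : ℕ)) * 2 ^ (n - 2 * (k : ℕ)) * catalan (k : ℕ) := by
    intro k
    rw [Fintype.card_prod, Fintype.card_prod]
    rw [← Nat.card_eq_fintype_card (α := {m : List Bool // m.length = n ∧ m.count true = 2 * (k:ℕ)}),
      card_mask]
    rw [DyckWord.card_dyckWord_semilength_eq_catalan]
    rw [← Nat.card_eq_fintype_card (α := {z : List Bool // z.length = n - 2 * (k:ℕ)}),
      card_len_bool]
    ring
  rw [Finset.sum_congr rfl (fun k _ => hcard k)]
  exact Fin.sum_univ_eq_sum_range (fun k => n.choose (2 * k) * 2 ^ (n - 2 * k) * catalan k) (n + 1)
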